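/- For H a standard Gaussian, the function y ↦ E[soft(H; y)²] / E[soft'(H; y)] is monotonically nonincreasing in y on (0, ∞). -/

import Mathlib

open MeasureTheory ProbabilityTheory Real
open scoped NNReal ENNReal

noncomputable def stdGaussian : Measure ℝ := gaussianReal 0 1

noncomputable def soft (u t : ℝ) : ℝ := Real.sign u * max (|u| - t) 0

noncomputable def soft' (x κ : ℝ) : ℝ := if κ < |x| then 1 else 0

noncomputable def phi (x : ℝ) : ℝ := (Real.sqrt (2 * Real.pi))⁻¹ * Real.exp (-x^2/2)

noncomputable def QT (y : ℝ) : ℝ := ∫ x in Set.Ioi y, phi x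

lemma phi_pos (x : ℝ) : 0 < phi x := by
  apply mul_pos (inv_pos.2 (Real.sqrt_pos.2 (by positivity))) (Real.exp_pos _)

lemma phi_cont : Continuous phi := by
  unfold phi; fun_prop

lemma phi_integrable : Integrable phi := by
  unfold phi
  apply Integrable.const_mul
  have : (fun x : ℝ => Real.exp (-x^2/2)) = fun x : ℝ => Real.exp (-(1/2) * x^2) := by
    ext x; ring_nf
  rw [this]
  exact integrable_exp_neg_mul_sq (by norm_num)

lemma phi_eq_gaussianPDFReal (x : ℝ) : gaussianPDFReal 0 1 x = phi x := by
  simp [gaussianPDFReal, phi]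
 

lemma integral_stdG (h : ℝ → ℝ) (hm : Measurable h) :
    ∫ x, h x ∂(gaussianReal 0 1) = ∫ x, h x * phi x := by
  rw [gaussianReal_of_var_ne_zero 0 one_ne_zero]
  have : gaussianPDF 0 1 = fun x => (((phi x).toNNReal : ℝ≥0) : ℝ≥0∞) := by
    ext x
    rw [gaussianPDF, phi_eq_gaussianPDFReal, ENNReal.ofReal]
  rw [this, integral_withDensity_eq_integral_smul (f := fun x => (phi x).toNNReal)]
  · congr 1; ext x
    rw [NNReal.smul_def, Real.coe_toNNReal _ (phi_pos x).le, smul_eq_mul, mul_comm]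
  · exact phi_cont.measurable.real_toNNReal

lemma QT_eq_sub (y : ℝ) : QT y = QT 0 - ∫ t in (0:ℝ)..y, phi t := by
  have h1 := intervalIntegral.integral_Iic_add_Ioi (f := phi) (μ := volume) (b := y)
    phi_integrable.integrableOn phi_integrable.integrableOn
  have h0 := intervalIntegral.integral_Iic_add_Ioi (f := phi) (μ := volume) (b := (0:ℝ))
    phi_integrable.integrableOn phi_integrable.integrableOn
  have hs := intervalIntegral.integral_Iic_sub_Iic (f := phi) (μ := volume) (a := (0:ℝ)) (b := y)
    phi_integrable.integrableOn phi_integrable.integrableOn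
  unfold QT
  linarith

lemma hasDerivAt_QT (y : ℝ) : HasDerivAt QT (-(phi y)) y := by
  have h : HasDerivAt (fun u => ∫ t in (0:ℝ)..u, phi t) (phi y) y :=
    intervalIntegral.integral_hasDerivAt_right (phi_integrable.intervalIntegrable)
      (phi_cont.stronglyMeasurable.stronglyMeasurableAtFilter)
      phi_cont.continuousAt
  have : QT = fun u => QT 0 - ∫ t in (0:ℝ)..u, phi t := funext QT_eq_sub
  rw [this]
  exact ((hasDerivAt_const y (QT 0)).sub h).congr_deriv (by ring)

lemma QT_tendsto_zero : Filter.Tendsto QT Filter.atTop (nhds 0) := by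
  have h := intervalIntegral_tendsto_integral_Ioi (0:ℝ) (phi_integrable.integrableOn) Filter.tendsto_id
  have : Filter.Tendsto (fun y => QT 0 - ∫ t in (0:ℝ)..y, phi t) Filter.atTop (nhds (QT 0 - QT 0)) :=
    (tendsto_const_nhds).sub h
  rw [sub_self] at this
  exact this.congr (fun y => (QT_eq_sub y).symm)

lemma QT_pos (y : ℝ) : 0 < QT y := by
  have : (∫ x in Set.Ioi y, phi x) > 0 := by
    apply (setIntegral_pos_iff_support_of_nonneg_ae ?_ ?_).2
    · have : Function.support phi = Set.univ := by
        ext x; simp [Function.mem_support, (phi_pos x).ne']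
      rw [this]
      simp [Set.inter_univ, Real.volume_Ioi]
    · exact Filter.Eventually.of_forall fun x => (phi_pos x).le
    · exact phi_integrable.integrableOn
  exact this

lemma hasDerivAt_phi (x : ℝ) : HasDerivAt phi (-x * phi x) x := by
  have h1 : HasDerivAt (fun x : ℝ => -x^2/2) (-x) x := by
    have := ((hasDerivAt_pow 2 x).neg).div_const 2
    simpa using this.congr_deriv (by ring)
  have h2 := (h1.exp).const_mul (Real.sqrt (2 * Real.pi))⁻¹
  unfold phi
  exact h2.congr_deriv (by ring)

lemma tendsto_mul_phi : Filter.Tendsto (fun x => x * phi x) Filter.atTop (nhds 0) := by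
  have key : Filter.Tendsto (fun x : ℝ => x * Real.exp (-x^2/2)) Filter.atTop (nhds 0) := by
    apply squeeze_zero' (g := fun x : ℝ => x * Real.exp (-x))
    · filter_upwards [Filter.eventually_ge_atTop (0:ℝ)] with x hx
      positivity
    · filter_upwards [Filter.eventually_ge_atTop (2:ℝ)] with x hx
      apply mul_le_mul_of_nonneg_left _ (by linarith)
      apply Real.exp_le_exp.2
      nlinarith
    · simpa using Real.tendsto_pow_mul_exp_neg_atTop_nhds_zero 1
  have : (fun x => x * phi x) = fun x => (Real.sqrt (2 * Real.pi))⁻¹ * (x * Real.exp (-x^2/2)) := by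
    ext x; unfold phi; ring
  rw [this]
  simpa using key.const_mul (Real.sqrt (2 * Real.pi))⁻¹

lemma tendsto_phi : Filter.Tendsto phi Filter.atTop (nhds 0) := by
  apply squeeze_zero' (g := fun x => x * phi x)
  · filter_upwards with x using (phi_pos x).le
  · filter_upwards [Filter.eventually_ge_atTop (1:ℝ)] with x hx
    nlinarith [phi_pos x]
  · exact tendsto_mul_phi

lemma integrable_poly2_phi (y : ℝ) : Integrable (fun x => (x - y)^2 * phi x) := by
  have e1 : Integrable (fun x : ℝ => x^2 * Real.exp (-(1/2) * x^2)) := by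
    have := integrable_rpow_mul_exp_neg_mul_sq (by norm_num : (0:ℝ) < 1/2)
      (by norm_num : (-1:ℝ) < 2)
    have heq : (fun x : ℝ => x ^ ((2:ℕ):ℝ) * Real.exp (-(1/2) * x^2))
        = fun x : ℝ => x^2 * Real.exp (-(1/2) * x^2) := by
      ext x; rw [Real.rpow_natCast]
    simpa [heq] using this
  have e2 : Integrable (fun x : ℝ => x * Real.exp (-(1/2) * x^2)) :=
    integrable_mul_exp_neg_mul_sq (by norm_num)
  have e3 : Integrable (fun x : ℝ => Real.exp (-(1/2) * x^2)) :=
    integrable_exp_neg_mul_sq (by norm_num)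
  have := (((e1.sub (e2.const_mul (2*y))).add (e3.const_mul (y^2))).const_mul
    (Real.sqrt (2 * Real.pi))⁻¹)
  apply this.congr
  apply Filter.Eventually.of_forall
  intro x
  simp only [Pi.sub_apply, Pi.add_apply]
  unfold phi
  have : -(1/2) * x^2 = -x^2/2 := by ring
  rw [this]
  ring

lemma integral_sq_tail (y : ℝ) :
    ∫ x in Set.Ioi y, (x - y)^2 * phi x = (1 + y^2) * QT y - y * phi y := by
  have hderiv : ∀ x ∈ Set.Ici y,
      HasDerivAt (fun x => (2*y - x) * phi x - (1+y^2) * QT x) ((x - y)^2 * phi x) x := by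
    intro x _
    have h1 : HasDerivAt (fun x : ℝ => (2*y - x) * phi x)
        ((0 - 1) * phi x + (2*y - x) * (-x * phi x)) x :=
      (((hasDerivAt_const x (2*y)).sub (hasDerivAt_id x))).mul (hasDerivAt_phi x)
    have h2 := (hasDerivAt_QT x).const_mul (1+y^2)
    have h3 := h1.sub h2
    exact h3.congr_deriv (by ring)
  have htend : Filter.Tendsto (fun x => (2*y - x) * phi x - (1+y^2) * QT x)
      Filter.atTop (nhds 0) := by
    have t1 : Filter.Tendsto (fun x => (2*y - x) * phi x) Filter.atTop (nhds 0) := by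
      have t0 := (tendsto_phi.const_mul (2*y)).sub tendsto_mul_phi
      norm_num at t0
      exact t0.congr (fun x => by ring)
    have := t1.sub (QT_tendsto_zero.const_mul (1+y^2))
    simpa using this
  have := integral_Ioi_of_hasDerivAt_of_tendsto' hderiv
    ((integrable_poly2_phi y).integrableOn) htend
  rw [this]
  ring

lemma phi_abs (x : ℝ) : phi |x| = phi x := by
  unfold phi; rw [sq_abs]

lemma g_closed (y : ℝ) (hy : 0 < y) : (∫ x, soft' x y ∂stdGaussian) = 2 * QT y := by
  have hm : Measurable (fun x => soft' x y) := by
    unfold soft'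
    exact Measurable.ite (measurableSet_lt measurable_const measurable_abs)
      measurable_const measurable_const
  rw [show _root_.stdGaussian = gaussianReal 0 1 from rfl, integral_stdG _ hm]
  have hpt : (fun x => soft' x y * phi x) = fun x => Set.indicator (Set.Ioi y) phi |x| := by
    ext x
    rw [Set.indicator_apply]
    simp only [soft', Set.mem_Ioi]
    rw [← phi_abs x]
    split <;> simp
  rw [hpt, integral_comp_abs (f := Set.indicator (Set.Ioi y) phi),
    setIntegral_indicator measurableSet_Ioi, Set.Ioi_inter_Ioi,
    max_eq_right hy.le]
  rfl

lemma f_closed (y : ℝ) (hy : 0 < y) :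
    (∫ x, (soft x y)^2 ∂stdGaussian) = 2 * ((1 + y^2) * QT y - y * phi y) := by
  have hm : Measurable (fun x => (soft x y)^2) := by
    unfold soft
    have hsgn : Measurable Real.sign := by
      unfold Real.sign
      exact Measurable.ite (measurableSet_lt measurable_id measurable_const) measurable_const
        (Measurable.ite (measurableSet_lt measurable_const measurable_id) measurable_const
          measurable_const)
    exact (hsgn.mul ((measurable_abs.sub measurable_const).max
      measurable_const)).pow_const 2
  rw [show _root_.stdGaussian = gaussianReal 0 1 from rfl, integral_stdG _ hm]
  have hpt : (fun x => (soft x y)^2 * phi x)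
      = fun x => Set.indicator (Set.Ioi y) (fun u => (u - y)^2 * phi u) |x| := by
    ext x
    rw [Set.indicator_apply]
    simp only [Set.mem_Ioi]
    rw [← phi_abs x]
    unfold soft
    by_cases h : y < |x|
    · simp only [if_pos h]
      have hx : x ≠ 0 := by
        intro h0; rw [h0] at h; simp at h; linarith
      have hs : (Real.sign x)^2 = 1 := by
        rcases lt_or_gt_of_ne hx with h1 | h1
        · rw [Real.sign_of_neg h1]; norm_num
        · rw [Real.sign_of_pos h1]; norm_num
      rw [mul_pow, hs, one_mul, max_eq_left (by linarith)]
    · simp only [if_neg h]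
      push_neg at h
      have : max (|x| - y) 0 = 0 := max_eq_right (by linarith)
      rw [this]
      ring
  rw [hpt, integral_comp_abs (f := Set.indicator (Set.Ioi y) (fun u => (u - y)^2 * phi u)),
    setIntegral_indicator measurableSet_Ioi, Set.Ioi_inter_Ioi,
    max_eq_right hy.le, integral_sq_tail y]

lemma key_poly (y : ℝ) (hy : 0 < y) :
    y^3 + 6*y ≤ Real.sqrt (y^2+8) * (y^2+2) := by
  have hs2 : Real.sqrt (y^2+8) ^ 2 = y^2+8 := Real.sq_sqrt (by positivity)
  have hs0 : 0 < Real.sqrt (y^2+8) := Real.sqrt_pos.2 (by positivity)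
  by_contra hlt
  push_neg at hlt
  have hP : 0 < Real.sqrt (y^2+8) * (y^2+2) :=
    mul_pos hs0 (by positivity)
  have h3 : (Real.sqrt (y^2+8) * (y^2+2))^2 = (y^3 + 6*y)^2 + 32 := by
    have : (Real.sqrt (y^2+8) * (y^2+2))^2 = (Real.sqrt (y^2+8))^2 * (y^2+2)^2 := by ring
    rw [this, hs2]
    ring
  nlinarith

noncomputable def eta (y : ℝ) : ℝ := 4 * phi y / (3*y + Real.sqrt (y^2+8)) - QT y

lemma c_pos (y : ℝ) (hy : 0 ≤ y) : 0 < 3*y + Real.sqrt (y^2+8) := by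
  have : 0 < Real.sqrt (y^2+8) := Real.sqrt_pos.2 (by positivity)
  linarith

lemma hasDerivAt_eta (y : ℝ) (hy : 0 < y) :
    HasDerivAt eta
      (((-y * (4 * phi y)) * (3*y + Real.sqrt (y^2+8))
        - 4 * phi y * (3 + y / Real.sqrt (y^2+8))) / (3*y + Real.sqrt (y^2+8))^2
       + phi y) y := by
  have hs0 : 0 < Real.sqrt (y^2+8) := Real.sqrt_pos.2 (by positivity)
  have hu : HasDerivAt (fun y => 4 * phi y) (-y * (4 * phi y)) y := by
    have := (hasDerivAt_phi y).const_mul 4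
    exact this.congr_deriv (by ring)
  have hsq : HasDerivAt (fun y : ℝ => y^2+8) (2*y) y := by
    simpa using ((hasDerivAt_pow 2 y).add_const 8)
  have hsqrt : HasDerivAt (fun y : ℝ => Real.sqrt (y^2+8)) (y / Real.sqrt (y^2+8)) y := by
    have := (Real.hasDerivAt_sqrt (by positivity : y^2+8 ≠ 0)).comp y hsq
    exact this.congr_deriv (by field_simp)
  have hv : HasDerivAt (fun y : ℝ => 3*y + Real.sqrt (y^2+8))
      (3 + y / Real.sqrt (y^2+8)) y := by
    exact (((hasDerivAt_id y).const_mul 3).add hsqrt).congr_deriv (by ring)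
  have hne : 3*y + Real.sqrt (y^2+8) ≠ 0 := (c_pos y hy.le).ne'
  have hdiv := hu.div hv hne
  have := hdiv.sub (hasDerivAt_QT y)
  exact this.congr_deriv (by ring)

lemma eta_deriv_nonpos (y : ℝ) (hy : 0 < y) :
    ((-y * (4 * phi y)) * (3*y + Real.sqrt (y^2+8))
        - 4 * phi y * (3 + y / Real.sqrt (y^2+8))) / (3*y + Real.sqrt (y^2+8))^2
       + phi y ≤ 0 := by
  set s := Real.sqrt (y^2+8) with hs
  have hs2 : s ^ 2 = y^2+8 := Real.sq_sqrt (by positivity)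
  have hs0 : 0 < s := Real.sqrt_pos.2 (by positivity)
  set c := 3*y + s with hc
  have hc0 : 0 < c := c_pos y hy.le
  have hkey : y^3 + 6*y ≤ s * (y^2+2) := key_poly y hy
  have hiden : ((-y * (4 * phi y)) * c - 4 * phi y * (3 + y / s)) / c^2 + phi y
      = phi y * (-4*y*c*s - 12*s - 4*y + c^2*s) / (c^2 * s) := by
    field_simp
    ring
  have hM : -4*y*c*s - 12*s - 4*y + c^2*s = 2*(y^3 + 6*y - s*(y^2+2)) := by
    rw [hc]
    linear_combination (s + 2*y) * hs2
  rw [hiden, hM]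
  apply div_nonpos_of_nonpos_of_nonneg
  · have : 2*(y^3 + 6*y - s*(y^2+2)) ≤ 0 := by linarith
    nlinarith [phi_pos y]
  · positivity

lemma eta_tendsto_zero : Filter.Tendsto eta Filter.atTop (nhds 0) := by
  have h1 : Filter.Tendsto (fun y => 4 * phi y / (3*y + Real.sqrt (y^2+8)))
      Filter.atTop (nhds 0) := by
    apply squeeze_zero' (g := fun y => 4 * phi y)
    · filter_upwards [Filter.eventually_ge_atTop (0:ℝ)] with y hy
      have hc := c_pos y hy
      have hp := phi_pos y
      positivity
    · filter_upwards [Filter.eventually_ge_atTop (0:ℝ)] with y hy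
      have hc := c_pos y hy
      have h8 : (1:ℝ) ≤ 3*y + Real.sqrt (y^2+8) := by
        have : (1:ℝ) ≤ Real.sqrt (y^2+8) := by
          rw [show (1:ℝ) = Real.sqrt 1 by simp]
          exact Real.sqrt_le_sqrt (by nlinarith)
        linarith
      rw [div_le_iff₀ hc]
      nlinarith [phi_pos y]
    · simpa using tendsto_phi.const_mul 4
  have := h1.sub QT_tendsto_zero
  simp at this; exact this

lemma eta_nonneg (y : ℝ) (hy : 0 < y) : 0 ≤ eta y := by
  have hanti : AntitoneOn eta (Set.Ici y) := by
    apply antitoneOn_of_deriv_nonpos (convex_Ici y)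
    · intro x hx
      exact (hasDerivAt_eta x (lt_of_lt_of_le hy hx)).continuousAt.continuousWithinAt
    · intro x hx
      rw [interior_Ici] at hx
      exact (hasDerivAt_eta x (hy.trans hx)).differentiableAt.differentiableWithinAt
    · intro x hx
      rw [interior_Ici] at hx
      rw [(hasDerivAt_eta x (hy.trans hx)).deriv]
      exact eta_deriv_nonpos x (hy.trans hx)
  apply le_of_tendsto eta_tendsto_zero
  filter_upwards [Filter.eventually_ge_atTop y] with z hz
  exact hanti (Set.self_mem_Ici) hz hz

lemma sampford (y : ℝ) (hy : 0 < y) :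
    QT y * (3*y + Real.sqrt (y^2+8)) ≤ 4 * phi y := by
  have h := eta_nonneg y hy
  have hc := c_pos y hy.le
  unfold eta at h
  rw [sub_nonneg, le_div_iff₀ hc] at h
  linarith

lemma key_ineq (y : ℝ) (hy : 0 < y) :
    2*y*(QT y)^2 + (y^2-1)*(QT y)*(phi y) - y*(phi y)^2 ≤ 0 := by
  set s := Real.sqrt (y^2+8) with hs
  have hs2 : s ^ 2 = y^2+8 := Real.sq_sqrt (by positivity)
  have hs0 : 0 < s := Real.sqrt_pos.2 (by positivity)
  set c := 3*y + s with hc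
  have hc0 : 0 < c := c_pos y hy.le
  set Q := QT y
  set f := phi y with hf
  have hQ : 0 < Q := QT_pos y
  have hφ : 0 < f := phi_pos y
  have hP : Q * c ≤ 4 * f := sampford y hy
  have hFpoly : 32*y + 4*(y^2-1)*c - y*c^2 = 2*((y^3+6*y) - s*(y^2+2)) := by
    rw [hc]
    linear_combination (-y) * hs2
  have hF : 32*y + 4*(y^2-1)*c - y*c^2 ≤ 0 := by
    rw [hFpoly]
    have := key_poly y hy
    linarith
  set P := Q * c with hPdef
  have hPpos : 0 < P := mul_pos hQ hc0
  have h1 : P^2 ≤ 4*f*P := by nlinarith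
  have hgoal : 2*y*P^2 + (y^2-1)*(f*c)*P - y*f^2*c^2 ≤ 0 := by
    have h2 : 2*y*P^2 + (y^2-1)*(f*c)*P - y*f^2*c^2
        ≤ P*(8*y*f + (y^2-1)*f*c) - y*f^2*c^2 := by nlinarith
    rcases le_or_gt (8*y*f + (y^2-1)*f*c) 0 with hcase | hcase
    · have : P*(8*y*f + (y^2-1)*f*c) ≤ 0 := mul_nonpos_of_nonneg_of_nonpos hPpos.le hcase
      nlinarith [mul_pos (mul_pos hy (mul_pos hφ hφ)) (mul_pos hc0 hc0)]
    · have h3 : P*(8*y*f + (y^2-1)*f*c) ≤ 4*f*(8*y*f + (y^2-1)*f*c) :=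
        mul_le_mul_of_nonneg_right hP hcase.le
      have h4 : 4*f*(8*y*f + (y^2-1)*f*c) - y*f^2*c^2
          = f^2 * (32*y + 4*(y^2-1)*c - y*c^2) := by ring
      nlinarith [mul_nonpos_of_nonneg_of_nonpos (sq_nonneg f) hF]
  have hexp : 2*y*P^2 + (y^2-1)*(f*c)*P - y*f^2*c^2
      = (2*y*Q^2 + (y^2-1)*Q*f - y*f^2) * c^2 := by
    rw [hPdef]; ring
  rw [hexp] at hgoal
  have hc2 : (0:ℝ) < c^2 := by positivity
  have := le_of_mul_le_mul_right (by linarith [hgoal] : (2*y*Q^2 + (y^2-1)*Q*f - y*f^2) * c^2 ≤ 0 * c^2) hc2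
  linarith

noncomputable def BB (y : ℝ) : ℝ := (1 + y^2) * QT y - y * phi y

lemma hasDerivAt_BB (y : ℝ) : HasDerivAt BB (2*y*QT y - 2*phi y) y := by
  have h1 : HasDerivAt (fun y : ℝ => (1 + y^2) * QT y)
      ((2*y) * QT y + (1 + y^2) * (-(phi y))) y := by
    have hp : HasDerivAt (fun y : ℝ => 1 + y^2) (2*y) y := by
      simpa using ((hasDerivAt_pow 2 y).const_add 1)
    exact hp.mul (hasDerivAt_QT y)
  have h2 : HasDerivAt (fun y : ℝ => y * phi y) (1 * phi y + y * (-y * phi y)) y :=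
    (hasDerivAt_id y).mul (hasDerivAt_phi y)
  have := h1.sub h2
  apply this.congr_deriv
  ring

lemma antitone_ratio : AntitoneOn (fun y => BB y / QT y) (Set.Ioi 0) := by
  apply antitoneOn_of_deriv_nonpos (convex_Ioi 0)
  · intro x hx
    exact (((hasDerivAt_BB x).div (hasDerivAt_QT x) (QT_pos x).ne')).continuousAt.continuousWithinAt
  · intro x hx
    rw [interior_Ioi] at hx
    exact ((hasDerivAt_BB x).div (hasDerivAt_QT x) (QT_pos x).ne').differentiableAt.differentiableWithinAt
  · intro x hx
    rw [interior_Ioi] at hx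
    rw [show (fun y => BB y / QT y) = BB / QT from rfl, ((hasDerivAt_BB x).div (hasDerivAt_QT x) (QT_pos x).ne').deriv]
    apply div_nonpos_of_nonpos_of_nonneg _ (sq_nonneg _)
    have hkey := key_ineq x hx
    have hexp : (2*x*QT x - 2*phi x) * QT x - BB x * -(phi x)
        = 2*x*(QT x)^2 + (x^2-1)*(QT x)*(phi x) - x*(phi x)^2 := by
      unfold BB; ring
    rw [hexp]
    exact hkey

theorem soft_ratio_antitone :
    AntitoneOn
      (fun y => (∫ x, (soft x y)^2 ∂stdGaussian) / (∫ x, soft' x y ∂stdGaussian))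
      (Set.Ioi 0) := by
  intro a ha b hb hab
  simp only []
  rw [f_closed a ha, f_closed b hb, g_closed a ha, g_closed b hb]
  have h2 : ∀ y : ℝ, 2 * ((1 + y^2) * QT y - y * phi y) / (2 * QT y) = BB y / QT y := by
    intro y
    rw [mul_div_mul_left _ _ (two_ne_zero)]
    rfl
  rw [h2 a, h2 b]
  exact antitone_ratio ha hb hab
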